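/- Let g ≥ 3 be an integer and suppose positive integers a > b > c, digits d₁, d₃ ∈ {1,…,g−1} and integers n₁, n₃ ≥ 2 with n₁ ≤ n₃ satisfy ab+1 = d₃(g^{n₃}−1)/(g−1) and bc+1 = d₁(g^{n₁}−1)/(g−1). If the rational numbers d₃·g^{n₃}/(d₃+g−1) and d₁·g^{n₁}/(d₁+g−1) are multiplicatively independent, then b ≤ 4·(2g−2)^{5√(n₃)+1}. -/

import Mathlib

/-- Two non-zero rationals are multiplicatively independent if
`α^u * β^v = 1` (with integer exponents) forces `u = v = 0`. -/
def MultIndep (α β : ℚ) : Prop :=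
  ∀ u v : ℤ, α ^ u * β ^ v = 1 → u = 0 ∧ v = 0

lemma int_le_of_modEq {b A B M : ℤ} (hb : 0 < b) (h : A ≡ B [ZMOD b]) (hne : A ≠ B)
    (hA0 : 0 ≤ A) (hAM : A ≤ M) (hB0 : 0 ≤ B) (hBM : B ≤ M) : b ≤ M := by
  have hd : b ∣ B - A := h.dvd
  have h1 : b ≤ |B - A| :=
    Int.le_of_dvd (abs_pos.mpr (sub_ne_zero.mpr (Ne.symm hne))) ((dvd_abs _ _).mpr hd)
  have h2 : |B - A| ≤ M := abs_le.mpr ⟨by linarith, by linarith⟩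
  linarith

lemma aux_le (b g d d' E E' : ℤ) (n n' P Q Δ : ℕ) (hb : 0 < b) (hg : 3 ≤ g)
    (hd0 : 0 ≤ d) (hd : d ≤ 2*g-2) (hd'0 : 0 ≤ d') (hd' : d' ≤ 2*g-2)
    (hE0 : 0 ≤ E) (hE : E ≤ 2*g-2) (hE'0 : 0 ≤ E') (hE' : E' ≤ 2*g-2)
    (h1 : d * g^n ≡ E [ZMOD b]) (h2 : d' * g^n' ≡ E' [ZMOD b])
    (hΔ : Q*n' = P*n + Δ)
    (hne : d^P * E'^Q ≠ d'^Q * E^P * g^Δ) :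
    b ≤ (2*g-2)^(P+Q) * g^Δ := by
  have hg0 : (0:ℤ) ≤ g := by linarith
  have hgg : (1:ℤ) ≤ 2*g-2 := by linarith
  have hgΔ : (1:ℤ) ≤ g^Δ := one_le_pow₀ (by linarith)
  have c1 : d^P * g^(n*P) ≡ E^P [ZMOD b] := by
    have := h1.pow P; rwa [mul_pow, ← pow_mul] at this
  have c2 : d'^Q * g^(n'*Q) ≡ E'^Q [ZMOD b] := by
    have := h2.pow Q; rwa [mul_pow, ← pow_mul] at this
  have key : d^P * E'^Q ≡ d'^Q * E^P * g^Δ [ZMOD b] := by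
    calc d^P * E'^Q ≡ d^P * (d'^Q * g^(n'*Q)) [ZMOD b] := c2.symm.mul_left _
    _ = d'^Q * (d^P * g^(n*P)) * g^Δ := by
        rw [show n'*Q = n*P + Δ by rw [mul_comm n' Q, hΔ, mul_comm P n], pow_add]; ring
    _ ≡ d'^Q * (E^P) * g^Δ [ZMOD b] := (c1.mul_left _).mul_right _
  apply int_le_of_modEq hb key hne
  · exact mul_nonneg (pow_nonneg hd0 _) (pow_nonneg hE'0 _)
  · calc d^P * E'^Q ≤ (2*g-2)^P * (2*g-2)^Q := by gcongr
    _ = (2*g-2)^(P+Q) := (pow_add _ _ _).symm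
    _ ≤ (2*g-2)^(P+Q) * g^Δ := le_mul_of_one_le_right (pow_nonneg (by linarith) _) hgΔ
  · exact mul_nonneg (mul_nonneg (pow_nonneg hd'0 _) (pow_nonneg hE0 _)) (pow_nonneg hg0 _)
  · calc d'^Q * E^P * g^Δ ≤ (2*g-2)^Q * (2*g-2)^P * g^Δ := by gcongr
    _ = (2*g-2)^(P+Q) * g^Δ := by rw [← pow_add, Nat.add_comm Q P]

set_option maxHeartbeats 1600000 in
lemma core (g d₁ d₃ n₁ n₃ : ℕ) (b : ℤ) (hb : 0 < b) (hg : 3 ≤ g)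
    (hd₁ : 1 ≤ d₁) (hd₁' : d₁ ≤ g - 1) (hd₃ : 1 ≤ d₃) (hd₃' : d₃ ≤ g - 1)
    (hn₁ : 2 ≤ n₁) (hn₁₃ : n₁ ≤ n₃)
    (hc₁ : (d₁:ℤ) * (g:ℤ)^n₁ ≡ (d₁:ℤ) + g - 1 [ZMOD b])
    (hc₃ : (d₃:ℤ) * (g:ℤ)^n₃ ≡ (d₃:ℤ) + g - 1 [ZMOD b])
    (hind : MultIndep ((d₃ : ℚ) * g ^ n₃ / (d₃ + g - 1)) ((d₁ : ℚ) * g ^ n₁ / (d₁ + g - 1)))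
    (u v u' v' e : ℕ) (hpne : (u,v) ≠ (u',v')) (he : e < n₃)
    (hord : u'*n₃ + v*n₁ ≤ u*n₃ + v'*n₁)
    (hgap : u*n₃ + v'*n₁ ≤ u'*n₃ + v*n₁ + e) :
    b ≤ (2*(g:ℤ)-2)^((u-u') + (u'-u) + (v-v') + (v'-v)) * (g:ℤ)^e := by
  have hgZ : (3:ℤ) ≤ g := by exact_mod_cast hg
  have hd₁Z : (1:ℤ) ≤ (d₁:ℤ) := by exact_mod_cast hd₁
  have hd₃Z : (1:ℤ) ≤ (d₃:ℤ) := by exact_mod_cast hd₃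
  have hd₁Z' : (d₁:ℤ) ≤ (g:ℤ) - 1 := by
    have h : (d₁:ℤ) + 1 ≤ g := by exact_mod_cast (by omega : d₁ + 1 ≤ g)
    linarith
  have hd₃Z' : (d₃:ℤ) ≤ (g:ℤ) - 1 := by
    have h : (d₃:ℤ) + 1 ≤ g := by exact_mod_cast (by omega : d₃ + 1 ≤ g)
    linarith
  have hgQ : (0:ℚ) < (g:ℚ) := by exact_mod_cast (by omega : 0 < g)
  have hd₁Q : (1:ℚ) ≤ (d₁:ℚ) := by exact_mod_cast hd₁
  have hd₃Q : (1:ℚ) ≤ (d₃:ℚ) := by exact_mod_cast hd₃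
  have hgQ3 : (3:ℚ) ≤ (g:ℚ) := by exact_mod_cast hg
  have hDα : ((d₃:ℚ) + (g:ℚ) - 1) ≠ 0 := by linarith
  have hDβ : ((d₁:ℚ) + (g:ℚ) - 1) ≠ 0 := by linarith
  have hβpos : (0:ℚ) < (d₁:ℚ) * (g:ℚ)^n₁ / ((d₁:ℚ) + (g:ℚ) - 1) := by
    apply div_pos (by positivity) (by linarith)
  rcases Nat.lt_trichotomy u' u with hu | hu | hu
  · -- u' < u : main case, Q1 := u - u' ≥ 1, P1 := v - v' ≥ 1
    obtain ⟨Q, hQ⟩ : ∃ Q, u = u' + (Q + 1) := ⟨u - u' - 1, by omega⟩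
    set Q1 := Q + 1 with hQ1
    have eu : u * n₃ = u' * n₃ + Q1 * n₃ := by rw [hQ]; ring
    have hn3le : n₃ ≤ Q1 * n₃ := by
      calc n₃ = 1 * n₃ := (one_mul _).symm
      _ ≤ Q1 * n₃ := Nat.mul_le_mul_right _ (by omega)
    have hvv : v' < v := by
      by_contra hcon
      push_neg at hcon
      have f3 : v * n₁ ≤ v' * n₁ := Nat.mul_le_mul_right _ hcon
      linarith
    obtain ⟨P, hP⟩ : ∃ P, v = v' + (P + 1) := ⟨v - v' - 1, by omega⟩
    set P1 := P + 1 with hP1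
    have ev : v * n₁ = v' * n₁ + P1 * n₁ := by rw [hP]; ring
    have hge : P1 * n₁ ≤ Q1 * n₃ := by linarith
    set Δ := Q1 * n₃ - P1 * n₁ with hΔdef
    have hΔ : Q1 * n₃ = P1 * n₁ + Δ := by omega
    have hΔe : Δ ≤ e := by omega
    have main := aux_le b (g:ℤ) (d₁:ℤ) (d₃:ℤ) ((d₁:ℤ) + g - 1) ((d₃:ℤ) + g - 1)
      n₁ n₃ P1 Q1 Δ hb hgZ (by linarith) (by linarith) (by linarith) (by linarith)
      (by linarith) (by linarith) (by linarith) (by linarith) hc₁ hc₃ hΔ ?hne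
    · calc b ≤ (2*(g:ℤ)-2)^(P1+Q1) * (g:ℤ)^Δ := main
      _ ≤ (2*(g:ℤ)-2)^((u-u') + (u'-u) + (v-v') + (v'-v)) * (g:ℤ)^e := by
          rw [show (u-u') + (u'-u) + (v-v') + (v'-v) = P1 + Q1 by omega]
          exact mul_le_mul_of_nonneg_left
            (pow_le_pow_right₀ (by linarith) hΔe) (pow_nonneg (by linarith) _)
    case hne =>
      intro heq
      have heqQ : (d₁:ℚ)^P1 * ((d₃:ℚ) + (g:ℚ) - 1)^Q1
          = (d₃:ℚ)^Q1 * ((d₁:ℚ) + (g:ℚ) - 1)^P1 * (g:ℚ)^Δ := by exact_mod_cast heq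
      have hkey : ((d₃:ℚ) * (g:ℚ)^n₃ / ((d₃:ℚ) + (g:ℚ) - 1))^(Q1:ℕ)
          = ((d₁:ℚ) * (g:ℚ)^n₁ / ((d₁:ℚ) + (g:ℚ) - 1))^(P1:ℕ) := by
        rw [div_pow, div_pow, div_eq_div_iff (pow_ne_zero _ hDα) (pow_ne_zero _ hDβ)]
        rw [mul_pow, mul_pow, ← pow_mul, ← pow_mul]
        rw [show n₃ * Q1 = n₁ * P1 + Δ by rw [mul_comm n₃ Q1, hΔ, mul_comm P1 n₁], pow_add]
        linear_combination (-(g:ℚ)^(n₁*P1)) * heqQ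
      have hone : ((d₃:ℚ) * (g:ℚ)^n₃ / ((d₃:ℚ) + (g:ℚ) - 1)) ^ ((Q1:ℕ):ℤ)
          * ((d₁:ℚ) * (g:ℚ)^n₁ / ((d₁:ℚ) + (g:ℚ) - 1)) ^ (-((P1:ℕ):ℤ)) = 1 := by
        rw [zpow_neg, zpow_natCast, zpow_natCast, hkey]
        exact mul_inv_cancel₀ (pow_ne_zero _ hβpos.ne')
      have h0 := (hind _ _ hone).1
      have : Q1 = 0 := by exact_mod_cast h0
      omega
  · -- u = u' : case B
    have hvne : v ≠ v' := fun h => hpne (by rw [hu, h])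
    have hvle : v ≤ v' := by
      have : v * n₁ ≤ v' * n₁ := by
        subst hu
        omega
      exact Nat.le_of_mul_le_mul_right this (by omega)
    obtain ⟨W, hW⟩ : ∃ W, v' = v + (W + 1) := ⟨v' - v - 1, by omega⟩
    set W1 := W + 1 with hW1
    have ev : v' * n₁ = v * n₁ + W1 * n₁ := by rw [hW]; ring
    have hΔe : W1 * n₁ ≤ e := by
      subst hu
      omega
    have hElt : (d₁:ℤ) + g - 1 < (d₁:ℤ) * (g:ℤ)^n₁ := by
      have h2' : (g:ℤ)^2 ≤ (g:ℤ)^n₁ := pow_le_pow_right₀ (by linarith) hn₁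
      have h3' : (g:ℤ)^n₁ ≤ (d₁:ℤ) * (g:ℤ)^n₁ :=
        le_mul_of_one_le_left (by positivity) hd₁Z
      nlinarith [sq_nonneg ((g:ℤ) - 1)]
    have main := aux_le b (g:ℤ) 1 (d₁:ℤ) 1 ((d₁:ℤ) + g - 1)
      0 n₁ 0 W1 (W1*n₁) hb hgZ (by linarith) (by linarith) (by linarith) (by linarith)
      (by linarith) (by linarith) (by linarith) (by linarith)
      (by simp) hc₁ (by simp) ?hne2
    · calc b ≤ (2*(g:ℤ)-2)^(0+W1) * (g:ℤ)^(W1*n₁) := main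
      _ ≤ (2*(g:ℤ)-2)^((u-u') + (u'-u) + (v-v') + (v'-v)) * (g:ℤ)^e := by
          rw [show (u-u') + (u'-u) + (v-v') + (v'-v) = 0 + W1 by omega]
          exact mul_le_mul_of_nonneg_left
            (pow_le_pow_right₀ (by linarith) hΔe) (pow_nonneg (by linarith) _)
    case hne2 =>
      simp only [pow_zero, one_mul, mul_one]
      apply ne_of_lt
      calc ((d₁:ℤ) + g - 1)^W1 < ((d₁:ℤ) * (g:ℤ)^n₁)^W1 :=
        pow_lt_pow_left₀ hElt (by linarith) (by omega)
      _ = (d₁:ℤ)^W1 * (g:ℤ)^(W1*n₁) := by rw [mul_pow, ← pow_mul, Nat.mul_comm n₁ W1]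
  · -- u < u' : case C
    obtain ⟨P, hP⟩ : ∃ P, u' = u + (P + 1) := ⟨u' - u - 1, by omega⟩
    set P1 := P + 1 with hP1
    have eu : u' * n₃ = u * n₃ + P1 * n₃ := by rw [hP]; ring
    have hn3le : n₃ ≤ P1 * n₃ := by
      calc n₃ = 1 * n₃ := (one_mul _).symm
      _ ≤ P1 * n₃ := Nat.mul_le_mul_right _ (by omega)
    have hvv : v < v' := by
      by_contra hcon
      push_neg at hcon
      have f3 : v' * n₁ ≤ v * n₁ := Nat.mul_le_mul_right _ hcon
      have : 0 < n₃ := by omega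
      linarith
    obtain ⟨Q, hQ⟩ : ∃ Q, v' = v + (Q + 1) := ⟨v' - v - 1, by omega⟩
    set Q1 := Q + 1 with hQ1
    have ev : v' * n₁ = v * n₁ + Q1 * n₁ := by rw [hQ]; ring
    have hge : P1 * n₃ ≤ Q1 * n₁ := by linarith
    set Δ := Q1 * n₁ - P1 * n₃ with hΔdef
    have hΔ : Q1 * n₁ = P1 * n₃ + Δ := by omega
    have hΔe : Δ ≤ e := by omega
    have main := aux_le b (g:ℤ) (d₃:ℤ) (d₁:ℤ) ((d₃:ℤ) + g - 1) ((d₁:ℤ) + g - 1)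
      n₃ n₁ P1 Q1 Δ hb hgZ (by linarith) (by linarith) (by linarith) (by linarith)
      (by linarith) (by linarith) (by linarith) (by linarith) hc₃ hc₁ hΔ ?hne3
    · calc b ≤ (2*(g:ℤ)-2)^(P1+Q1) * (g:ℤ)^Δ := main
      _ ≤ (2*(g:ℤ)-2)^((u-u') + (u'-u) + (v-v') + (v'-v)) * (g:ℤ)^e := by
          rw [show (u-u') + (u'-u) + (v-v') + (v'-v) = P1 + Q1 by omega]
          exact mul_le_mul_of_nonneg_left
            (pow_le_pow_right₀ (by linarith) hΔe) (pow_nonneg (by linarith) _)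
    case hne3 =>
      intro heq
      have heqQ : (d₃:ℚ)^P1 * ((d₁:ℚ) + (g:ℚ) - 1)^Q1
          = (d₁:ℚ)^Q1 * ((d₃:ℚ) + (g:ℚ) - 1)^P1 * (g:ℚ)^Δ := by exact_mod_cast heq
      have hkey : ((d₁:ℚ) * (g:ℚ)^n₁ / ((d₁:ℚ) + (g:ℚ) - 1))^(Q1:ℕ)
          = ((d₃:ℚ) * (g:ℚ)^n₃ / ((d₃:ℚ) + (g:ℚ) - 1))^(P1:ℕ) := by
        rw [div_pow, div_pow, div_eq_div_iff (pow_ne_zero _ hDβ) (pow_ne_zero _ hDα)]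
        rw [mul_pow, mul_pow, ← pow_mul, ← pow_mul]
        rw [show n₁ * Q1 = n₃ * P1 + Δ by rw [mul_comm n₁ Q1, hΔ, mul_comm P1 n₃], pow_add]
        linear_combination (-(g:ℚ)^(n₃*P1)) * heqQ
      have hone : ((d₃:ℚ) * (g:ℚ)^n₃ / ((d₃:ℚ) + (g:ℚ) - 1)) ^ (-((P1:ℕ):ℤ))
          * ((d₁:ℚ) * (g:ℚ)^n₁ / ((d₁:ℚ) + (g:ℚ) - 1)) ^ ((Q1:ℕ):ℤ) = 1 := by
        rw [zpow_neg, zpow_natCast, zpow_natCast, ← hkey]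
        exact inv_mul_cancel₀ (pow_ne_zero _ hβpos.ne')
      have h0 := (hind _ _ hone).1
      have : (P1:ℤ) = 0 := by linarith [neg_eq_zero.mp h0]
      have : P1 = 0 := by exact_mod_cast this
      omega

set_option maxHeartbeats 2000000 in
theorem stmt_12 (g a b c d₁ d₃ n₁ n₃ : ℕ) (hg : 3 ≤ g)
    (hc : 0 < c) (hcb : c < b) (hba : b < a)
    (hd₁ : 1 ≤ d₁) (hd₁' : d₁ ≤ g - 1) (hd₃ : 1 ≤ d₃) (hd₃' : d₃ ≤ g - 1)
    (hn₁ : 2 ≤ n₁) (hn₃ : 2 ≤ n₃) (hn₁₃ : n₁ ≤ n₃)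
    (hab : (a * b + 1) * (g - 1) = d₃ * (g ^ n₃ - 1))
    (hbc : (b * c + 1) * (g - 1) = d₁ * (g ^ n₁ - 1))
    (hind : MultIndep ((d₃ : ℚ) * g ^ n₃ / (d₃ + g - 1)) ((d₁ : ℚ) * g ^ n₁ / (d₁ + g - 1))) :
    (b : ℝ) ≤ 4 * (2 * (g : ℝ) - 2) ^ (5 * Real.sqrt n₃ + 1) := by
  have hb : (0:ℤ) < b := by exact_mod_cast (by omega : 0 < b)
  -- congruences
  have h1g : (1:ℕ) ≤ g := by omega
  have hp3 : (1:ℕ) ≤ g ^ n₃ := Nat.one_le_pow _ _ (by omega)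
  have hp1 : (1:ℕ) ≤ g ^ n₁ := Nat.one_le_pow _ _ (by omega)
  have habZ : ((a:ℤ)*b+1)*((g:ℤ)-1) = (d₃:ℤ)*((g:ℤ)^n₃ - 1) := by
    have := congrArg (Nat.cast : ℕ → ℤ) hab
    push_cast [Nat.cast_sub h1g, Nat.cast_sub hp3] at this
    convert this using 2 <;> push_cast <;> ring
  have hbcZ : ((b:ℤ)*c+1)*((g:ℤ)-1) = (d₁:ℤ)*((g:ℤ)^n₁ - 1) := by
    have := congrArg (Nat.cast : ℕ → ℤ) hbc
    push_cast [Nat.cast_sub h1g, Nat.cast_sub hp1] at this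
    convert this using 2 <;> push_cast <;> ring
  have hc₃ : (d₃:ℤ) * (g:ℤ)^n₃ ≡ (d₃:ℤ) + g - 1 [ZMOD b] := by
    apply Int.ModEq.symm
    rw [Int.modEq_iff_dvd]
    exact ⟨a*((g:ℤ)-1), by linear_combination -habZ⟩
  have hc₁ : (d₁:ℤ) * (g:ℤ)^n₁ ≡ (d₁:ℤ) + g - 1 [ZMOD b] := by
    apply Int.ModEq.symm
    rw [Int.modEq_iff_dvd]
    exact ⟨c*((g:ℤ)-1), by linear_combination -hbcZ⟩
    -- pigeonhole setup
  set s0 := Nat.sqrt n₃ with hs0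
  set T := s0 + 1 with hT
  set q := 2*n₃/(T+2) + 1 with hq
  have hq0 : 0 < q := Nat.succ_pos _
  have hs1 : 1 ≤ s0 := by
    rw [hs0]
    exact (Nat.le_sqrt.mpr (by omega))
  have hqmul : 2*n₃ < q*(T+2) := by
    have h := Nat.div_add_mod (2*n₃) (T+2)
    have hm := Nat.mod_lt (2*n₃) (show 0 < T+2 by omega)
    calc 2*n₃ = (T+2)*(2*n₃/(T+2)) + (2*n₃)%(T+2) := h.symm
    _ < (T+2)*(2*n₃/(T+2)) + (T+2) := by omega
    _ = q*(T+2) := by rw [hq]; ring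
  have heq1 : q - 1 < n₃ := by
    have h1 : 2*n₃/(T+2) ≤ 2*n₃/3 := Nat.div_le_div_left (by omega) (by omega)
    have h2 : 2*n₃/3 < n₃ := Nat.div_lt_of_lt_mul (by omega)
    omega
  -- the pigeonhole
  obtain ⟨p, hp, p', hp', hpne, hfeq⟩ :=
    Finset.exists_ne_map_eq_of_card_lt_of_maps_to
      (s := (Finset.range (T+1)) ×ˢ (Finset.range (T+1)))
      (t := Finset.range (T*(T+2)))
      (f := fun p => (p.1*n₃ + (T-p.2)*n₁)/q)
      (by
        rw [Finset.card_product, Finset.card_range, Finset.card_range]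
        calc T*(T+2) = T*T + 2*T := by ring
        _ < T*T + 2*T + 1 := by omega
        _ = (T+1)*(T+1) := by ring)
      (by
        intro p hp
        rw [Finset.mem_coe, Finset.mem_product, Finset.mem_range, Finset.mem_range] at hp
        rw [Finset.mem_coe, Finset.mem_range]
        rw [Nat.div_lt_iff_lt_mul hq0]
        have b1 : p.1*n₃ ≤ T*n₃ := Nat.mul_le_mul_right _ (by omega)
        have b2 : (T-p.2)*n₁ ≤ T*n₃ := Nat.mul_le_mul (by omega) hn₁₃
        have b3 : T*(2*n₃) < T*(q*(T+2)) :=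
          mul_lt_mul_of_pos_left hqmul (by omega)
        calc p.1*n₃ + (T-p.2)*n₁ ≤ T*n₃ + T*n₃ := by omega
        _ = T*(2*n₃) := by ring
        _ < T*(q*(T+2)) := b3
        _ = T*(T+2)*q := by ring)
  rw [Finset.mem_product, Finset.mem_range, Finset.mem_range] at hp hp'
  obtain ⟨hu, hv⟩ := hp
  obtain ⟨hu', hv'⟩ := hp'
  set u := p.1 with hup
  set v := p.2 with hvp
  set u' := p'.1 with hup'
  set v' := p'.2 with hvp'
  -- gap from equal quotients
  have div_gap : ∀ x y : ℕ, x/q = y/q → x < y + q := by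
    intro x y hxy
    by_contra hcon
    push_neg at hcon
    have h2 : (y+q)/q ≤ x/q := Nat.div_le_div_right hcon
    rw [Nat.add_div_right _ hq0] at h2
    omega
  have hg1 : u*n₃ + (T-v)*n₁ < u'*n₃ + (T-v')*n₁ + q := div_gap _ _ hfeq
  have hg2 : u'*n₃ + (T-v')*n₁ < u*n₃ + (T-v)*n₁ + q := div_gap _ _ hfeq.symm
  have fv : (T-v)*n₁ + v*n₁ = T*n₁ := by
    rw [← Nat.add_mul, Nat.sub_add_cancel (by omega)]
  have fv' : (T-v')*n₁ + v'*n₁ = T*n₁ := by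
    rw [← Nat.add_mul, Nat.sub_add_cancel (by omega)]
  have hG1 : u*n₃ + v'*n₁ < u'*n₃ + v*n₁ + q := by linarith
  have hG2 : u'*n₃ + v*n₁ < u*n₃ + v'*n₁ + q := by linarith
  have hpq : (u,v) ≠ (u',v') := by
    intro hcon
    apply hpne
    rw [Prod.ext_iff] at hcon ⊢
    exact hcon
  -- apply core (both orientations)
  have hcore : (b:ℤ) ≤ (2*(g:ℤ)-2)^(2*T) * (g:ℤ)^(q-1) := by
    have mono : ∀ S : ℕ, S ≤ 2*T →
        (2*(g:ℤ)-2)^S * (g:ℤ)^(q-1) ≤ (2*(g:ℤ)-2)^(2*T) * (g:ℤ)^(q-1) := by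
      intro S hS
      have : (3:ℤ) ≤ (g:ℤ) := by exact_mod_cast hg
      exact mul_le_mul_of_nonneg_right
        (pow_le_pow_right₀ (by linarith) hS) (pow_nonneg (by linarith) _)
    rcases le_total (u'*n₃ + v*n₁) (u*n₃ + v'*n₁) with hord | hord
    · have := core g d₁ d₃ n₁ n₃ b hb hg hd₁ hd₁' hd₃ hd₃' hn₁ hn₁₃ hc₁ hc₃ hind
        u v u' v' (q-1) hpq heq1 hord (by omega)
      exact le_trans this (mono _ (by omega))
    · have := core g d₁ d₃ n₁ n₃ b hb hg hd₁ hd₁' hd₃ hd₃' hn₁ hn₁₃ hc₁ hc₃ hind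
        u' v' u v (q-1) (Ne.symm hpq) heq1 hord (by omega)
      exact le_trans this (mono _ (by omega))
  -- combine exponents
  have hgZ : (3:ℤ) ≤ (g:ℤ) := by exact_mod_cast hg
  have hKb : (b:ℤ) ≤ (2*(g:ℤ)-2)^(2*T + (q-1)) := by
    calc (b:ℤ) ≤ (2*(g:ℤ)-2)^(2*T) * (g:ℤ)^(q-1) := hcore
    _ ≤ (2*(g:ℤ)-2)^(2*T) * (2*(g:ℤ)-2)^(q-1) :=
        mul_le_mul_of_nonneg_left (pow_le_pow_left₀ (by linarith) (by linarith) _)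
          (pow_nonneg (by linarith) _)
    _ = (2*(g:ℤ)-2)^(2*T + (q-1)) := (pow_add _ _ _).symm
  -- to the reals
  set K := 2*T + (q-1) with hK
  have hbR : (b:ℝ) ≤ (2*(g:ℝ)-2)^K := by
    have : ((b:ℤ):ℝ) ≤ (((2*(g:ℤ)-2)^K : ℤ):ℝ) := by exact_mod_cast hKb
    push_cast at this
    exact this
  have hgR : (3:ℝ) ≤ (g:ℝ) := by exact_mod_cast hg
  have hbase : (1:ℝ) ≤ 2*(g:ℝ)-2 := by linarith
  -- exponent inequality
  have hexpR : (K:ℝ) ≤ 5*Real.sqrt n₃ + 1 := by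
    set r := Real.sqrt (n₃:ℝ) with hr
    have hr0 : 0 ≤ r := Real.sqrt_nonneg _
    have hr2 : r^2 = (n₃:ℝ) := Real.sq_sqrt (by positivity)
    have hsr : (s0:ℝ) ≤ r := by
      have h1 : s0^2 ≤ n₃ := Nat.sqrt_le' n₃
      have h1' : (s0:ℝ)^2 ≤ (n₃:ℝ) := by exact_mod_cast h1
      nlinarith
    have hrs : r < (s0:ℝ) + 1 := by
      have h2 : n₃ < (s0+1)^2 := Nat.lt_succ_sqrt' n₃
      have h2' : (n₃:ℝ) < ((s0:ℝ)+1)^2 := by exact_mod_cast h2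
      nlinarith
    have hr1 : 1 ≤ r := by
      by_contra hcon
      push_neg at hcon
      have h5 : (2:ℝ) ≤ (n₃:ℝ) := by exact_mod_cast hn₃
      nlinarith [mul_nonneg hr0 hr0]
    set e := 2*n₃/(T+2) with he'
    have h3 : e*(T+2) ≤ 2*n₃ := Nat.div_mul_le_self _ _
    have hef : (e:ℝ)*((T:ℝ)+2) ≤ 2*(n₃:ℝ) := by exact_mod_cast h3
    have hTr : (T:ℝ) = (s0:ℝ)+1 := by rw [hT]; push_cast; ring
    have he0 : (0:ℝ) ≤ (e:ℝ) := by positivity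
    have hKval : (K:ℝ) = 2*(s0:ℝ) + 2 + (e:ℝ) := by
      have hqe : q = e + 1 := by rw [hq, he']
      rw [hK, hT, show q - 1 = e by omega]
      push_cast
      ring
    rw [hKval]
    nlinarith [mul_nonneg he0 (by linarith : (0:ℝ) ≤ (s0:ℝ)+3-(r+2)), hTr, hef,
      mul_nonneg (sub_nonneg.mpr hsr) hr0, sq_nonneg (r-1), sq_nonneg (r-(s0:ℝ)),
      mul_nonneg (sub_nonneg.mpr hsr) (by linarith : (0:ℝ) ≤ r - 1)]
  have hrpow : (2*(g:ℝ)-2)^K ≤ (2*(g:ℝ)-2)^(5*Real.sqrt n₃ + 1) := by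
    rw [← Real.rpow_natCast (2*(g:ℝ)-2) K]
    exact Real.rpow_le_rpow_of_exponent_le hbase hexpR
  have hnn : (0:ℝ) ≤ (2*(g:ℝ)-2)^(5*Real.sqrt n₃ + 1) :=
    Real.rpow_nonneg (by linarith) _
  calc (b:ℝ) ≤ (2*(g:ℝ)-2)^K := hbR
  _ ≤ (2*(g:ℝ)-2)^(5*Real.sqrt n₃ + 1) := hrpow
  _ ≤ 4*(2*(g:ℝ)-2)^(5*Real.sqrt n₃ + 1) := by linarith
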